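/- Let A, B, C be nonnegative reals with A + B + C = 1, and define χ_{y⊕r} = −B·log₂B − C·log₂C + (B+C)·log₂(B+C) and χ_y = −A·log₂A − B·log₂B + (A+B)·log₂(A+B) (with 0·log₂0 = 0). If δ' = 1 − χ_{y⊕r} satisfies 0 ≤ δ' < 1/2, then χ_y ≤ h(δ') where h is the binary entropy function h(x) = −(1−x)log₂(1−x) − x·log₂x. -/

import Mathlib

/-- helper: `x * log (x / s) = x * log x - x * log s` for `0 ≤ x`, `0 < s`. -/
lemma mul_log_div_aux (x s : ℝ) (hx : 0 ≤ x) (hs : 0 < s) :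
    x * Real.log (x / s) = x * Real.log x - x * Real.log s := by
  rcases eq_or_lt_of_le hx with h | h
  · simp [← h]
  · rw [Real.log_div h.ne' hs.ne']; ring

/-- convexity consequence: if `B ≤ x`, `B ≤ y`, `x + y = B + 1` then
`x log x + y log y ≤ B log B`. -/
lemma conv_aux (B x y : ℝ) (hB : 0 ≤ B) (hx : B ≤ x) (hy : B ≤ y)
    (hxy : x + y = B + 1) :
    x * Real.log x + y * Real.log y ≤ B * Real.log B := by
  have hB1 : B ≤ 1 := by linarith
  rcases eq_or_lt_of_le hB1 with h1 | h1
  · have hx1 : x = 1 := by linarith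
    have hy1 : y = 1 := by linarith
    rw [hx1, hy1, h1]
    norm_num
  · set lam : ℝ := (y - B) / (1 - B) with hlam
    have h1B : 0 < 1 - B := by linarith
    have hy1 : y ≤ 1 := by linarith
    have hlam0 : 0 ≤ lam := div_nonneg (by linarith) h1B.le
    have hlam1 : lam ≤ 1 := by
      rw [div_le_one h1B]; linarith
    have hmemB : B ∈ Set.Ici (0:ℝ) := hB
    have hmem1 : (1:ℝ) ∈ Set.Ici (0:ℝ) := by norm_num
    have hconv := Real.convexOn_mul_log.2
    have hlm : lam * (1 - B) = y - B := div_mul_cancel₀ _ h1B.ne'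
    have hxe : x = 1 - lam + lam * B := by linear_combination hxy + hlm
    have hye : y = (1 - lam) * B + lam := by linear_combination -hlm
    have h1 : x * Real.log x ≤ (1 - lam) * (1 * Real.log 1) + lam * (B * Real.log B) := by
      have := hconv hmem1 hmemB (by linarith : (0:ℝ) ≤ 1 - lam) hlam0 (by ring)
      simpa [← hxe, smul_eq_mul] using this
    have h2 : y * Real.log y ≤ (1 - lam) * (B * Real.log B) + lam * (1 * Real.log 1) := by
      have := hconv hmemB hmem1 (by linarith : (0:ℝ) ≤ 1 - lam) hlam0 (by ring)
      simpa [← hye, smul_eq_mul] using this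
    simp only [Real.log_one, mul_zero, one_mul, zero_mul] at h1 h2
    linarith

theorem stmt_6 (A B C : ℝ) (hA : 0 ≤ A) (hB : 0 ≤ B) (hC : 0 ≤ C)
    (hsum : A + B + C = 1)
    (χyr χy : ℝ)
    (hχyr : χyr = -(B * Real.logb 2 B) - C * Real.logb 2 C
        + (B + C) * Real.logb 2 (B + C))
    (hχy : χy = -(A * Real.logb 2 A) - B * Real.logb 2 B
        + (A + B) * Real.logb 2 (A + B))
    (δ' : ℝ) (hδ : δ' = 1 - χyr) (hδ0 : 0 ≤ δ') (hδ1 : δ' < 1 / 2) :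
    χy ≤ -((1 - δ') * Real.logb 2 (1 - δ')) - δ' * Real.logb 2 δ' := by
  have hl2 : (0:ℝ) < Real.log 2 := Real.log_pos one_lt_two
  -- s = B + C
  set s : ℝ := B + C with hs
  have hs0 : 0 < s := by
    rcases lt_or_eq_of_le (by positivity : (0:ℝ) ≤ s) with h | h
    · exact h
    · exfalso
      have hB0 : B = 0 := by linarith
      have hC0 : C = 0 := by linarith
      rw [hχyr, hB0, hC0, ← h] at hδ
      simp at hδ
      linarith
  -- step 2 : χyr ≤ s , hence A ≤ δ'
  have hχyr_le : χyr ≤ s := by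
    have key : χyr * Real.log 2 = s * Real.binEntropy (B / s) := by
      rw [hχyr, Real.binEntropy]
      have h1s : 1 - B / s = C / s := by field_simp; linarith
      rw [h1s, Real.log_inv, Real.log_inv]
      have e1 : s * (B / s * -Real.log (B / s) + C / s * -Real.log (C / s))
          = -(B * Real.log (B / s)) - C * Real.log (C / s) := by
        field_simp; ring
      rw [e1, mul_log_div_aux B s hB hs0, mul_log_div_aux C s hC hs0]
      simp only [Real.logb]
      field_simp
      ring
    have hb := Real.binEntropy_le_log_two (p := B / s)
    have : χyr * Real.log 2 ≤ s * Real.log 2 := by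
      rw [key]
      exact mul_le_mul_of_nonneg_left hb hs0.le
    exact le_of_mul_le_mul_right this hl2
  have hAδ : A ≤ δ' := by
    have : A = 1 - s := by linarith
    linarith
  -- step 3 : χy * log 2 ≤ binEntropy A
  have hstep3 : χy * Real.log 2 ≤ Real.binEntropy A := by
    have hBE : Real.binEntropy A = -(A * Real.log A) - s * Real.log s := by
      rw [Real.binEntropy, Real.log_inv, Real.log_inv]
      have : 1 - A = s := by linarith
      rw [this]; ring
    have hconv := conv_aux B (A + B) s hB (by linarith) (by linarith) (by linarith)
    have hχyl : χy * Real.log 2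
        = -(A * Real.log A) - B * Real.log B + (A + B) * Real.log (A + B) := by
      rw [hχy]
      simp only [Real.logb]
      field_simp
    rw [hχyl, hBE]
    linarith
  -- step 4 : monotonicity of binEntropy
  have hmono : Real.binEntropy A ≤ Real.binEntropy δ' := by
    have := Real.binEntropy_strictMonoOn.monotoneOn
      (Set.mem_Icc.mpr ⟨hA, by linarith⟩)
      (Set.mem_Icc.mpr ⟨hδ0, by linarith⟩) hAδ
    exact this
  -- conclude
  have hgoal : (-((1 - δ') * Real.logb 2 (1 - δ')) - δ' * Real.logb 2 δ') * Real.log 2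
      = Real.binEntropy δ' := by
    rw [Real.binEntropy, Real.log_inv, Real.log_inv]
    simp only [Real.logb]
    field_simp
    ring
  have : χy * Real.log 2 ≤ (-((1 - δ') * Real.logb 2 (1 - δ')) - δ' * Real.logb 2 δ') * Real.log 2 := by
    rw [hgoal]; linarith
  exact le_of_mul_le_mul_right this hl2
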